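/- arXiv:1407.5917 — 4 statements merged into one kernel-verified Lean document; each statement's English description precedes it below -/
import Mathlib

section
/- For every finite set S of at least two points in the Euclidean plane ℝ², there exists a closed disk of minimum radius containing S, and it is unique: there is a closed disk D ⊇ S such that every closed disk containing S has radius at least the radius of D, and any two closed disks containing S whose radius equals this minimum radius have the same center (and hence coincide). -/
open EuclideanGeometry Metric Real Set
open scoped RealInnerProductSpace

noncomputable section

/-- The Euclidean plane. -/
abbrev Plane : Type := EuclideanSpace ℝ (Fin 2)

instance : Fact (Module.finrank ℝ Plane = 2) := ⟨finrank_euclideanSpace_fin⟩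

/-- `IsSED S c r`: the closed disk centered at `c` with radius `r` contains `S` and
has minimum radius among all closed disks containing `S`
(i.e. it is the smallest enclosing disk of `S`, and `Metric.sphere c r` is `SEC S`). -/
def IsSED (S : Set Plane) (c : Plane) (r : ℝ) : Prop :=
  0 ≤ r ∧ S ⊆ Metric.closedBall c r ∧
    ∀ (c' : Plane) (r' : ℝ), 0 ≤ r' → S ⊆ Metric.closedBall c' r' → r ≤ r'

/-- The point with coordinates `(x, y)`. -/
def pt (x y : ℝ) : Plane := (WithLp.equiv 2 (Fin 2 → ℝ)).symm ![x, y]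

/-- The unit vector at angle `φ`. -/
def unitVec (φ : ℝ) : Plane := pt (Real.cos φ) (Real.sin φ)

/-- A regular `n`-gon, given by its center, its (positive) circumradius and a phase `rot`. -/
structure RegularPolygon (n : ℕ) where
  center : Plane
  radius : ℝ
  radius_pos : 0 < radius
  rot : ℝ

namespace RegularPolygon

variable {n : ℕ}

/-- The `k`-th vertex, `center + radius • (cos (rot + 2πk/n), sin (rot + 2πk/n))`
(indices act modulo `n`, by periodicity of `cos`/`sin`). -/
def vertex (P : RegularPolygon n) (k : ℕ) : Plane :=
  P.center + P.radius • unitVec (P.rot + 2 * π * k / n)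

/-- The edge joining vertex `k` to vertex `k+1` (a closed segment). -/
def edge (P : RegularPolygon n) (k : ℕ) : Set Plane :=
  segment ℝ (P.vertex k) (P.vertex (k + 1))

/-- The relative interior of edge `k` (the open segment). -/
def edgeInt (P : RegularPolygon n) (k : ℕ) : Set Plane :=
  openSegment ℝ (P.vertex k) (P.vertex (k + 1))

/-- The boundary of the polygon: the union of its edges. -/
def boundary (P : RegularPolygon n) : Set Plane :=
  ⋃ k : Fin n, P.edge k

/-- The vertex set of the polygon. -/
def vertexSet (P : RegularPolygon n) : Set Plane :=
  Set.range fun k : Fin n => P.vertex k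

end RegularPolygon

/-- `Supports P S`: the regular `n`-gon `P` is a supporting polygon of `S`: for each pair of
adjacent edges, one of the two edges contains exactly two points of `S` (possibly at its
endpoints) and the relative interior of the other edge contains no point of `S`. -/
def Supports {n : ℕ} (P : RegularPolygon n) (S : Set Plane) : Prop :=
  ∀ k : ℕ,
    ((S ∩ P.edge k).ncard = 2 ∧ S ∩ P.edgeInt (k + 1) = ∅) ∨
    ((S ∩ P.edge (k + 1)).ncard = 2 ∧ S ∩ P.edgeInt k = ∅)

/-- `S` is Pre-regular: it has a supporting regular `n`-gon. -/
def PreRegular (n : ℕ) (S : Set Plane) : Prop :=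
  ∃ P : RegularPolygon n, Supports P S

/-- `x` and `y` are companions w.r.t. `P`: distinct points lying on a common edge of `P`. -/
def Companions {n : ℕ} (P : RegularPolygon n) (x y : Plane) : Prop :=
  x ≠ y ∧ ∃ k : ℕ, x ∈ P.edge k ∧ y ∈ P.edge k

/-- `p` lies on the ray emanating from `c` with direction `u`. -/
def OnRayFrom (c u p : Plane) : Prop := ∃ t : ℝ, 0 ≤ t ∧ p = c + t • u

/-- `S` is Co-radial w.r.t. `c`: two distinct points of `S` lie on a common ray
emanating from `c`. -/
def Coradial (c : Plane) (S : Set Plane) : Prop :=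
  ∃ p ∈ S, ∃ q ∈ S, p ≠ q ∧ ∃ u : Plane, ‖u‖ = 1 ∧ OnRayFrom c u p ∧ OnRayFrom c u q

/-- `S` is a Half-disk set w.r.t. the center `c`: there is a line through `c` such that one of
the two open half-planes bounded by it contains no point of `S`. -/
def HalfDisk (c : Plane) (S : Set Plane) : Prop :=
  ∃ u : Plane, u ≠ 0 ∧ ∀ p ∈ S, ⟪u, p - c⟫ ≤ 0

/-- The standard orientation of the plane. -/
def stdOrient : Orientation ℝ Plane (Fin 2) :=
  (EuclideanSpace.basisFun (Fin 2) ℝ).toBasis.orientation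

/-- The counterclockwise angle from `v` to `w`, a value in `[0, 2π)`. -/
def ccwAngle (v w : Plane) : ℝ :=
  if 0 ≤ (stdOrient.oangle v w).toReal then (stdOrient.oangle v w).toReal
  else (stdOrient.oangle v w).toReal + 2 * π

/-- Existence and uniqueness of the smallest enclosing disk. -/
theorem smallest_enclosing_disk_exists_unique (S : Set Plane)
    (hfin : S.Finite) (hcard : 2 ≤ S.ncard) :
    ∃ (c : Plane) (r : ℝ), 0 ≤ r ∧ S ⊆ Metric.closedBall c r ∧
      (∀ (c' : Plane) (r' : ℝ), 0 ≤ r' → S ⊆ Metric.closedBall c' r' → r ≤ r') ∧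
      (∀ c₁ c₂ : Plane, S ⊆ Metric.closedBall c₁ r → S ⊆ Metric.closedBall c₂ r →
        c₁ = c₂) := by
  have hSne : S.Nonempty := Set.nonempty_of_ncard_ne_zero (by omega)
  obtain ⟨p₀, hp₀⟩ := hSne
  have hTne : hfin.toFinset.Nonempty := ⟨p₀, hfin.mem_toFinset.2 hp₀⟩
  set f : Plane → ℝ := fun c => hfin.toFinset.sup' hTne (fun p => dist p c) with hf
  have hfle : ∀ c, ∀ p ∈ S, dist p c ≤ f c := fun c p hp =>
    Finset.le_sup' (fun p => dist p c) (hfin.mem_toFinset.2 hp)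
  have hsub : ∀ c, S ⊆ Metric.closedBall c (f c) := by
    intro c p hp
    simpa [Metric.mem_closedBall, dist_comm] using hfle c p hp
  have hle : ∀ c r', (∀ p ∈ S, dist p c ≤ r') → f c ≤ r' := by
    intro c r' h
    exact Finset.sup'_le _ _ fun p hp => h p (hfin.mem_toFinset.1 hp)
  have htri : ∀ c c', f c ≤ f c' + dist c c' := by
    intro c c'
    refine hle c _ fun p hp => ?_
    calc dist p c ≤ dist p c' + dist c' c := dist_triangle _ _ _
      _ ≤ f c' + dist c c' := by
          rw [dist_comm c' c]; exact add_le_add (hfle c' p hp) le_rfl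
  have hcont : Continuous f := by
    refine LipschitzWith.continuous (K := 1) (LipschitzWith.of_dist_le_mul fun c c' => ?_)
    rw [NNReal.coe_one, one_mul, Real.dist_eq, abs_sub_le_iff]
    constructor
    · linarith [htri c c']
    · have := htri c' c; rw [dist_comm c' c] at this; linarith
  have hfnonneg : ∀ c, 0 ≤ f c := fun c => le_trans dist_nonneg (hfle c p₀ hp₀)
  obtain ⟨c, hcK, hcmin⟩ := (isCompact_closedBall p₀ (f p₀ + 1)).exists_isMinOn
    ⟨p₀, Metric.mem_closedBall_self (by linarith [hfnonneg p₀])⟩ hcont.continuousOn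
  have hmin : ∀ c', f c ≤ f c' := by
    intro c'
    by_cases h : c' ∈ Metric.closedBall p₀ (f p₀ + 1)
    · exact hcmin h
    · have h1 : f p₀ + 1 < dist c' p₀ := by
        simpa [Metric.mem_closedBall] using h
      have h2 : f c ≤ f p₀ := hcmin (Metric.mem_closedBall_self (by linarith [hfnonneg p₀]))
      have h3 : dist p₀ c' ≤ f c' := hfle c' p₀ hp₀
      rw [dist_comm] at h1
      linarith
  set r := f c with hr
  refine ⟨c, r, hfnonneg c, hsub c, fun c' r' _ hsub' => ?_, fun c₁ c₂ h₁ h₂ => ?_⟩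
  · exact le_trans (hmin c') (hle c' r' fun p hp => by
      simpa [Metric.mem_closedBall, dist_comm] using hsub' hp)
  · by_contra hne
    set m := midpoint ℝ c₁ c₂ with hm
    have hkey : ∀ p : Plane, ‖p - c₁‖ ^ 2 + ‖p - c₂‖ ^ 2
        = 2 * ‖p - m‖ ^ 2 + 2 * ‖m - c₁‖ ^ 2 := by
      intro p
      have hpar := parallelogram_law_with_norm ℝ (p - m) (m - c₁)
      have e1 : (p - m) + (m - c₁) = p - c₁ := by abel
      have e2 : (p - m) - (m - c₁) = p - c₂ := by
        have h2 : m + m = c₁ + c₂ := midpoint_add_self ℝ c₁ c₂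
        have : (p - m) - (m - c₁) = p + c₁ - (m + m) := by abel
        rw [this, h2]; abel
      rw [e1, e2] at hpar
      ring_nf
      ring_nf at hpar
      linarith
    have hmd : ‖m - c₁‖ = dist c₁ c₂ / 2 := by
      have := dist_midpoint_left (𝕜 := ℝ) c₁ c₂
      rw [dist_eq_norm] at this
      rw [this]
      norm_num
      ring
    have hd : 0 < dist c₁ c₂ := dist_pos.2 hne
    have hball : ∀ p ∈ S, ‖p - m‖ ^ 2 ≤ r ^ 2 - (dist c₁ c₂ / 2) ^ 2 := by
      intro p hp
      have hp1 : ‖p - c₁‖ ≤ r := by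
        have := h₁ hp; rwa [Metric.mem_closedBall, dist_eq_norm] at this
      have hp2 : ‖p - c₂‖ ≤ r := by
        have := h₂ hp; rwa [Metric.mem_closedBall, dist_eq_norm] at this
      have hk := hkey p
      rw [hmd] at hk
      nlinarith [norm_nonneg (p - c₁), norm_nonneg (p - c₂)]
    have hnn : 0 ≤ r ^ 2 - (dist c₁ c₂ / 2) ^ 2 :=
      le_trans (sq_nonneg _) (hball p₀ hp₀)
    set r' := Real.sqrt (r ^ 2 - (dist c₁ c₂ / 2) ^ 2) with hr'
    have hsub'' : S ⊆ Metric.closedBall m r' := by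
      intro p hp
      rw [Metric.mem_closedBall, dist_eq_norm]
      exact (Real.le_sqrt (norm_nonneg _) hnn).2 (hball p hp)
    have hlt : r' < r := by
      have h1 : r' ^ 2 = r ^ 2 - (dist c₁ c₂ / 2) ^ 2 := Real.sq_sqrt hnn
      have h2 : 0 ≤ r' := Real.sqrt_nonneg _
      nlinarith [hfnonneg c]
    have := hmin m
    have h4 : f m ≤ r' := hle m r' fun p hp => by
      simpa [Metric.mem_closedBall, dist_comm] using hsub'' hp
    linarith
end
end

section
/- Let S be a finite set of at least two points in ℝ², and let the closed disk of center c and radius r be its smallest enclosing disk, i.e., S is contained in this disk and every closed disk containing S has radius at least r. Then c lies in the convex hull of S ∩ SEC(S), where SEC(S) is the circle of center c and radius r. -/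
open EuclideanGeometry Metric Real Set
open scoped RealInnerProductSpace

noncomputable section

/-- The center of the smallest enclosing disk of a finite set `S` of at least
two points lies in the convex hull of `S ∩ SEC(S)`. -/
theorem sed_center_mem_convexHull (S : Set Plane) (hfin : S.Finite) (hcard : 2 ≤ S.ncard)
    (c : Plane) (r : ℝ) (hsed : IsSED S c r) :
    c ∈ convexHull ℝ (S ∩ Metric.sphere c r) := by
  classical
  by_contra hc
  obtain ⟨hr0, hsub, hmin⟩ := hsed
  obtain ⟨p₀, q₀, hp₀, hq₀, hpq⟩ := (Set.one_lt_ncard_iff hfin).mp (by omega)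
  have hSne : S.Nonempty := ⟨p₀, hp₀⟩
  have hrpos : 0 < r := by
    rcases lt_or_eq_of_le hr0 with h | h
    · exact h
    · exfalso
      have h1 := hsub hp₀
      have h2 := hsub hq₀
      rw [Metric.mem_closedBall, ← h, dist_le_zero] at h1 h2
      exact hpq (h1.trans h2.symm)
  -- separating unit vector
  have hvex : ∃ v : Plane, ‖v‖ = 1 ∧ ∀ p ∈ S ∩ Metric.sphere c r, ⟪v, p - c⟫ < 0 := by
    rcases Set.eq_empty_or_nonempty (S ∩ Metric.sphere c r) with hT | hT
    · exact ⟨EuclideanSpace.single 0 1, by simp [EuclideanSpace.norm_single],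
        by simp [hT]⟩
    · have hTfin : (S ∩ Metric.sphere c r).Finite := hfin.inter_of_left _
      obtain ⟨f, u, hfu, hux⟩ := geometric_hahn_banach_closed_point
        (convex_convexHull ℝ _) (hTfin.isClosed_convexHull ℝ) hc
      set v₀ := (InnerProductSpace.toDual ℝ Plane).symm f with hv₀def
      have hv₀ : ∀ p ∈ S ∩ Metric.sphere c r, ⟪v₀, p - c⟫ < 0 := by
        intro p hp
        have h1 : f p < u := hfu p (subset_convexHull ℝ _ hp)
        have h2 : ⟪v₀, p⟫ < ⟪v₀, c⟫ := by
          rw [hv₀def, InnerProductSpace.toDual_symm_apply,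
            InnerProductSpace.toDual_symm_apply]
          exact h1.trans hux
        rw [inner_sub_right]; linarith
      obtain ⟨p, hp⟩ := hT
      have hv₀ne : v₀ ≠ 0 := by
        intro h
        have := hv₀ p hp
        rw [h, inner_zero_left] at this
        linarith
      refine ⟨‖v₀‖⁻¹ • v₀, ?_, ?_⟩
      · rw [norm_smul, norm_inv, norm_norm,
          inv_mul_cancel₀ (norm_ne_zero_iff.mpr hv₀ne)]
      · intro q hq
        rw [real_inner_smul_left]
        exact mul_neg_of_pos_of_neg (inv_pos.mpr (norm_pos_iff.mpr hv₀ne)) (hv₀ q hq)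
  obtain ⟨v, hv1, hvsep⟩ := hvex
  set g : Plane → ℝ :=
    fun p => if p ∈ Metric.sphere c r then -⟪v, p - c⟫ else (r - dist p c) / 2 with hg
  have hgpos : ∀ p ∈ S, 0 < g p := by
    intro p hp
    by_cases h : p ∈ Metric.sphere c r
    · simp only [hg, if_pos h]
      linarith [hvsep p ⟨hp, h⟩]
    · simp only [hg, if_neg h]
      have h1 := hsub hp
      rw [Metric.mem_closedBall] at h1
      rw [Metric.mem_sphere] at h
      have : dist p c < r := lt_of_le_of_ne h1 h
      linarith
  obtain ⟨pm, hpm, hpmle⟩ := Set.exists_min_image S g hfin hSne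
  set t := g pm with ht
  have htpos : 0 < t := hgpos pm hpm
  set c' := c - t • v with hc'
  have hcc' : dist c c' = t := by
    rw [hc', dist_eq_norm]
    have : c - (c - t • v) = t • v := by abel
    rw [this, norm_smul, hv1, Real.norm_eq_abs, abs_of_pos htpos, mul_one]
  have hlt : ∀ p ∈ S, dist p c' < r := by
    intro p hp
    have htle : t ≤ g p := hpmle p hp
    by_cases h : p ∈ Metric.sphere c r
    · have hdc : dist p c = r := h
      have hre : p - (c - t • v) = (p - c) + t • v := by abel
      have hdsq : dist p c' ^ 2 = dist p c ^ 2 + 2 * t * ⟪p - c, v⟫ + t ^ 2 := by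
        rw [hc', dist_eq_norm, dist_eq_norm, hre, norm_add_sq_real,
          real_inner_smul_right, norm_smul, hv1, Real.norm_eq_abs, abs_of_pos htpos]
        ring
      have hinner : ⟪p - c, v⟫ < 0 := by
        rw [real_inner_comm]; exact hvsep p ⟨hp, h⟩
      have htle' : t ≤ -⟪v, p - c⟫ := by
        simp only [hg] at htle
        rwa [if_pos h] at htle
      rw [real_inner_comm] at htle'
      have hsq : dist p c' ^ 2 < r ^ 2 := by
        rw [hdsq, hdc]; nlinarith
      exact lt_of_pow_lt_pow_left₀ 2 hr0 hsq
    · have htle' : t ≤ (r - dist p c) / 2 := by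
        simp only [hg] at htle
        rwa [if_neg h] at htle
      have h1 := hsub hp
      rw [Metric.mem_closedBall] at h1
      rw [Metric.mem_sphere] at h
      have h2 : dist p c < r := lt_of_le_of_ne h1 h
      calc dist p c' ≤ dist p c + dist c c' := dist_triangle p c c'
        _ = dist p c + t := by rw [hcc']
        _ < r := by linarith
  obtain ⟨pmax, hpmax, hmax⟩ := Set.exists_max_image S (fun p => dist p c') hfin hSne
  have hsub' : S ⊆ Metric.closedBall c' (dist pmax c') := fun p hp => hmax p hp
  have := hmin c' (dist pmax c') dist_nonneg hsub'
  linarith [hlt pmax hpmax]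
end
end

section
/- Let S be a finite set of at least two points in ℝ², with smallest enclosing disk of center c and radius r. Then every closed half-plane whose boundary line passes through c contains at least one point of S ∩ SEC(S). In particular, if S ∩ SEC(S) consists of exactly two points p and q, then p and q are antipodal on SEC(S): c is the midpoint of the segment pq. -/
open EuclideanGeometry Metric Real Set
open scoped RealInnerProductSpace

noncomputable section

set_option maxHeartbeats 1000000 in
lemma sed_halfplane (S : Set Plane) (hfin : S.Finite) (hne : S.Nonempty)
    (c : Plane) (r : ℝ) (hsed : IsSED S c r) (u : Plane) (hu : u ≠ 0) :
    ∃ p ∈ S ∩ Metric.sphere c r, 0 ≤ ⟪u, p - c⟫ := by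
  by_contra h
  push_neg at h
  have key : ∀ p ∈ S, ∀ᶠ ε in nhdsWithin (0:ℝ) (Set.Ioi 0), dist p (c - ε • u) < r := by
    intro p hp
    have hle : dist p c ≤ r := hsed.2.1 hp
    rcases lt_or_eq_of_le hle with hlt | heq
    · have hc0 : Continuous (fun ε : ℝ => dist p (c - ε • u)) := by fun_prop
      have hcont : Filter.Tendsto (fun ε : ℝ => dist p (c - ε • u)) (nhds 0) (nhds (dist p c)) := by
        have := hc0.tendsto 0
        simpa using this
      exact nhdsWithin_le_nhds (hcont.eventually_lt tendsto_const_nhds hlt)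
    · have hps : p ∈ S ∩ Metric.sphere c r := ⟨hp, Metric.mem_sphere.mpr heq⟩
      have hneg : ⟪u, p - c⟫ < 0 := h p hps
      have hev : ∀ᶠ ε in nhdsWithin (0:ℝ) (Set.Ioi 0),
          ε * ‖u‖^2 < -2 * ⟪u, p - c⟫ := by
        apply nhdsWithin_le_nhds
        have : Filter.Tendsto (fun ε : ℝ => ε * ‖u‖^2) (nhds 0) (nhds 0) := by
          simpa using (Filter.tendsto_id.mul_const (‖u‖^2) :
            Filter.Tendsto (fun ε : ℝ => ε * ‖u‖^2) (nhds 0) (nhds (0 * ‖u‖^2)))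
        exact this.eventually_lt tendsto_const_nhds (by linarith)
      filter_upwards [hev, self_mem_nhdsWithin] with ε hε (hε0 : ε ∈ Set.Ioi 0)
      have hε0' : (0:ℝ) < ε := hε0
      have hsq : dist p (c - ε • u) ^ 2 = r^2 + ε * (2 * ⟪u, p - c⟫ + ε * ‖u‖^2) := by
        have h1 : p - (c - ε • u) = (p - c) + ε • u := by abel
        rw [dist_eq_norm, h1, norm_add_sq_real]
        have h2 : ‖p - c‖ = r := by rwa [← dist_eq_norm]
        rw [h2, real_inner_smul_right, norm_smul, real_inner_comm]
        have : ‖ε‖ = ε := abs_of_pos hε0'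
        rw [this]
        ring
      have hlt : dist p (c - ε • u) ^ 2 < r ^ 2 := by
        rw [hsq]
        nlinarith
      nlinarith [dist_nonneg (x := p) (y := c - ε • u), hsed.1,
        abs_nonneg (dist p (c - ε • u))]
  have key2 : ∀ᶠ ε in nhdsWithin (0:ℝ) (Set.Ioi 0),
      ∀ p ∈ hfin.toFinset, dist p (c - ε • u) < r := by
    rw [Filter.eventually_all_finset]
    intro p hp
    exact key p (hfin.mem_toFinset.mp hp)
  obtain ⟨ε, hε⟩ := key2.exists
  obtain ⟨p₀, hp₀S, hmax⟩ := Set.exists_max_image S (fun p => dist p (c - ε • u)) hfin hne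
  have h1 : r ≤ dist p₀ (c - ε • u) :=
    hsed.2.2 _ _ dist_nonneg (fun p hp => Metric.mem_closedBall.mpr (hmax p hp))
  have h2 : dist p₀ (c - ε • u) < r := hε p₀ (hfin.mem_toFinset.mpr hp₀S)
  linarith

/-- Every closed half-plane whose boundary line passes through the center `c`
of the smallest enclosing disk contains a point of `S ∩ SEC(S)`; in particular if
`S ∩ SEC(S)` consists of exactly two points, they are antipodal. -/
theorem sed_halfplane_and_antipodal (S : Set Plane) (hfin : S.Finite) (hcard : 2 ≤ S.ncard)
    (c : Plane) (r : ℝ) (hsed : IsSED S c r) :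
    (∀ u : Plane, u ≠ 0 → ∃ p ∈ S ∩ Metric.sphere c r, 0 ≤ ⟪u, p - c⟫) ∧
    (∀ p q : Plane, p ≠ q → S ∩ Metric.sphere c r = {p, q} → midpoint ℝ p q = c) := by
  have hne : S.Nonempty := by
    rcases Set.eq_empty_or_nonempty S with hS | hS
    · simp [hS, Set.ncard_empty] at hcard
    · exact hS
  have part1 := sed_halfplane S hfin hne c r hsed
  refine ⟨part1, ?_⟩
  intro p q hpq hset
  by_contra hmid
  set a := p - c with ha
  set b := q - c with hb
  have hpS : p ∈ S ∩ Metric.sphere c r := by rw [hset]; left; rfl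
  have hqS : q ∈ S ∩ Metric.sphere c r := by rw [hset]; right; rfl
  have hna : ‖a‖ = r := by
    have := hpS.2
    rwa [Metric.mem_sphere, dist_eq_norm] at this
  have hnb : ‖b‖ = r := by
    have := hqS.2
    rwa [Metric.mem_sphere, dist_eq_norm] at this
  have hab : a + b ≠ 0 := by
    intro hab0
    apply hmid
    have hpc : p + q = c + c := by
      have h3 : p + q - (c + c) = (p - c) + (q - c) := by abel
      have h4 : p + q - (c + c) = 0 := by rw [h3, ← ha, ← hb, hab0]
      exact sub_eq_zero.mp h4
    rw [midpoint_eq_smul_add, hpc, ← two_smul ℝ c, smul_smul, invOf_mul_self, one_smul]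
  set u : Plane := -(a + b) with hu
  have hu0 : u ≠ 0 := by
    rw [hu]
    exact neg_ne_zero.mpr hab
  have habn : 0 < ‖a + b‖^2 := pow_pos (norm_pos_iff.mpr hab) 2
  have hinner : -(r^2) < ⟪a, b⟫ := by
    have hexp : ‖a + b‖^2 = ‖a‖^2 + 2 * ⟪a, b⟫ + ‖b‖^2 := norm_add_sq_real a b
    rw [hna, hnb] at hexp
    nlinarith
  have hua : ⟪u, a⟫ < 0 := by
    have : ⟪u, a⟫ = -(‖a‖^2 + ⟪a, b⟫) := by
      rw [hu, inner_neg_left, inner_add_left, real_inner_self_eq_norm_sq, real_inner_comm b a]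
    rw [this, hna]
    nlinarith
  have hub : ⟪u, b⟫ < 0 := by
    have : ⟪u, b⟫ = -(⟪a, b⟫ + ‖b‖^2) := by
      rw [hu, inner_neg_left, inner_add_left, real_inner_self_eq_norm_sq]
    rw [this, hnb]
    nlinarith
  obtain ⟨x, hxS, hx⟩ := part1 u hu0
  rw [hset] at hxS
  rcases hxS with rfl | rfl
  · rw [← ha] at hx; linarith
  · rw [← hb] at hx; linarith
end
end

section
/- Let a, b, c, d ∈ ℝ² be four pairwise distinct points, no three of which are collinear, forming a convex quadrilateral in this cyclic order (equivalently, the open segments joining a to c and joining b to d intersect). Assume dist(a,b) ≤ dist(b,c), dist(c,d) < dist(d,a), and ∠adb ≥ ∠bdc. Then ∠abc + ∠cda ≤ π. -/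
open EuclideanGeometry Metric Real Set
open scoped RealInnerProductSpace

noncomputable section

instance : Module.Oriented ℝ Plane (Fin 2) := ⟨stdOrient⟩

private lemma my_angle_pos_of_not_collinear {p q r : Plane}
    (h : ¬ Collinear ℝ ({p, q, r} : Set Plane)) : 0 < ∠ p q r ∧ ∠ p q r < π := by
  constructor
  · rcases (EuclideanGeometry.angle_nonneg p q r).lt_or_eq with h' | h'
    · exact h'
    · exfalso
      rcases EuclideanGeometry.angle_eq_zero_iff_ne_and_wbtw.1 h'.symm with ⟨-, hw⟩ | ⟨-, hw⟩
      · exact h (hw.collinear.subset (by intro y hy; simp only [Set.mem_insert_iff, Set.mem_singleton_iff] at hy ⊢; tauto))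
      · exact h (hw.collinear.subset (by intro y hy; simp only [Set.mem_insert_iff, Set.mem_singleton_iff] at hy ⊢; tauto))
  · rcases (EuclideanGeometry.angle_le_pi p q r).lt_or_eq with h' | h'
    · exact h'
    · exact absurd ((EuclideanGeometry.angle_eq_pi_iff_sbtw.1 h').wbtw.collinear) h

/-- The sine rule in product form: `sin(∠ p q r) · qp · qr` is (twice) the area of the
triangle, hence symmetric in the vertices. -/
private lemma my_sine_rule (p q r : Plane) :
    Real.sin (∠ p q r) * (dist q p * dist q r)
      = Real.sin (∠ q p r) * (dist p q * dist p r) := by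
  have hqp : dist q p = ‖p -ᵥ q‖ := by rw [dist_comm, dist_eq_norm_vsub Plane]
  have hqr : dist q r = ‖r -ᵥ q‖ := by rw [dist_comm, dist_eq_norm_vsub Plane]
  have hpq : dist p q = ‖q -ᵥ p‖ := by rw [dist_comm, dist_eq_norm_vsub Plane]
  have hpr : dist p r = ‖r -ᵥ p‖ := by rw [dist_comm, dist_eq_norm_vsub Plane]
  rw [EuclideanGeometry.angle, EuclideanGeometry.angle, hqp, hqr, hpq, hpr,
    InnerProductGeometry.sin_angle_mul_norm_mul_norm,
    InnerProductGeometry.sin_angle_mul_norm_mul_norm]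
  congr 1
  have h1 : q -ᵥ p = -(p -ᵥ q) := (neg_vsub_eq_vsub_rev p q).symm
  have h2 : r -ᵥ p = (r -ᵥ q) - (p -ᵥ q) := (vsub_sub_vsub_cancel_right r p q).symm
  rw [h1, h2]
  set u := p -ᵥ q
  set v := r -ᵥ q
  simp only [inner_neg_neg, inner_neg_left, inner_neg_right, inner_sub_left, inner_sub_right,
    real_inner_comm v u]
  ring

/-- Additivity of unoriented angles, given consistent signs of the oriented angles. -/
private lemma my_angle_add {p q r t : Plane} (hpq : p ≠ q) (hrq : r ≠ q) (htq : t ≠ q)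
    (h1 : (∡ p q t).sign = (∡ p q r).sign)
    (h2 : (∡ t q r).sign = (∡ p q r).sign)
    (h0 : (∡ p q r).sign ≠ 0) :
    ∠ p q r = ∠ p q t + ∠ t q r := by
  have hadd : ∡ p q t + ∡ t q r = ∡ p q r := EuclideanGeometry.oangle_add hpq htq hrq
  have hne : ∀ p' q' r' : Plane, (∡ p' q' r').sign ≠ 0 → ∠ p' q' r' ≠ π := by
    intro p' q' r' hs hpi
    rw [← EuclideanGeometry.oangle_eq_pi_iff_angle_eq_pi] at hpi
    rw [hpi, Real.Angle.sign_coe_pi] at hs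
    exact hs rfl
  have htri : (∡ p q r).sign = 1 ∨ (∡ p q r).sign = -1 := by
    cases h' : (∡ p q r).sign
    · exact absurd h' h0
    · exact Or.inr rfl
    · exact Or.inl rfl
  have key : ((∠ p q t + ∠ t q r : ℝ) : Real.Angle) = ((∠ p q r : ℝ) : Real.Angle) := by
    rcases htri with hs | hs
    · have e1 := EuclideanGeometry.oangle_eq_angle_of_sign_eq_one (h1.trans hs)
      have e2 := EuclideanGeometry.oangle_eq_angle_of_sign_eq_one (h2.trans hs)
      have e3 := EuclideanGeometry.oangle_eq_angle_of_sign_eq_one hs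
      rw [e1, e2, e3] at hadd
      rw [Real.Angle.coe_add]
      exact hadd
    · have e1 := EuclideanGeometry.oangle_eq_neg_angle_of_sign_eq_neg_one (h1.trans hs)
      have e2 := EuclideanGeometry.oangle_eq_neg_angle_of_sign_eq_neg_one (h2.trans hs)
      have e3 := EuclideanGeometry.oangle_eq_neg_angle_of_sign_eq_neg_one hs
      rw [e1, e2, e3] at hadd
      rw [Real.Angle.coe_add]
      have : -((∠ p q t : Real.Angle) + (∠ t q r : Real.Angle)) = -(∠ p q r : Real.Angle) := by
        rw [neg_add]; exact hadd
      exact neg_inj.1 this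
  obtain ⟨k, hk⟩ := Real.Angle.angle_eq_iff_two_pi_dvd_sub.1 key
  have b1 : ∠ p q t < π :=
    lt_of_le_of_ne (EuclideanGeometry.angle_le_pi _ _ _) (hne _ _ _ (h1.trans_ne h0))
  have b2 : ∠ t q r < π :=
    lt_of_le_of_ne (EuclideanGeometry.angle_le_pi _ _ _) (hne _ _ _ (h2.trans_ne h0))
  have b3 : ∠ p q r < π :=
    lt_of_le_of_ne (EuclideanGeometry.angle_le_pi _ _ _) (hne _ _ _ h0)
  have n1 := EuclideanGeometry.angle_nonneg p q t
  have n2 := EuclideanGeometry.angle_nonneg t q r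
  have n3 := EuclideanGeometry.angle_nonneg p q r
  have hπ := Real.pi_pos
  have hkb : -1 < (k : ℝ) ∧ (k : ℝ) < 1 := by
    constructor <;> nlinarith
  have hk0 : k = 0 := by
    have h1' : (-1 : ℤ) < k := by exact_mod_cast hkb.1
    have h2' : k < (1 : ℤ) := by exact_mod_cast hkb.2
    omega
  rw [hk0] at hk
  push_cast at hk
  linarith

private lemma my_ncol_swap {p q r : Plane} (h : ¬ Collinear ℝ ({p, q, r} : Set Plane)) :
    ¬ Collinear ℝ ({p, r, q} : Set Plane) :=
  fun hc => h (hc.subset (by intro y hy; simp only [Set.mem_insert_iff,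
    Set.mem_singleton_iff] at hy ⊢; tauto))

private lemma my_ncol_rot {p q r : Plane} (h : ¬ Collinear ℝ ({p, q, r} : Set Plane)) :
    ¬ Collinear ℝ ({q, r, p} : Set Plane) :=
  fun hc => h (hc.subset (by intro y hy; simp only [Set.mem_insert_iff,
    Set.mem_singleton_iff] at hy ⊢; tauto))

private lemma my_ratio_le {s1 s2 t1 t2 u v w : ℝ} (ht1 : 0 ≤ t1) (ht2 : 0 ≤ t2) (hw : 0 < w)
    (e1 : s1 * w = t1 * u) (e2 : s2 * w = t2 * v) (huv : u ≤ v) :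
    s1 * t2 ≤ s2 * t1 := by
  have t3 : t1 * t2 * u ≤ t1 * t2 * v :=
    mul_le_mul_of_nonneg_left huv (mul_nonneg ht1 ht2)
  have h : s1 * t2 * w ≤ s2 * t1 * w := by nlinarith
  exact le_of_mul_le_mul_right h hw

private lemma my_ratio_lt {s1 s2 t1 t2 u v w : ℝ} (ht1 : 0 < t1) (ht2 : 0 < t2) (hw : 0 < w)
    (e1 : s1 * w = t1 * u) (e2 : s2 * w = t2 * v) (huv : u < v) :
    s1 * t2 < s2 * t1 := by
  have t3 : t1 * t2 * u < t1 * t2 * v :=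
    mul_lt_mul_of_pos_left huv (mul_pos ht1 ht2)
  have h : s1 * t2 * w < s2 * t1 * w := by nlinarith
  exact lt_of_mul_lt_mul_right h hw.le

/-- The trigonometric core of Statement 4. -/
private lemma my_core {α1 α2 β1 β2 γ1 γ2 : ℝ}
    (hα1 : 0 < α1) (hα1' : α1 < π) (hα2 : 0 < α2) (hα2' : α2 < π)
    (hβ1 : 0 < β1) (hβ1' : β1 < π) (hβ2 : 0 < β2) (hβ2' : β2 < π)
    (hγ1 : 0 < γ1) (hγ1' : γ1 < π) (hγ2 : 0 < γ2) (hγ2' : γ2 < π)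
    (T1 : β1 + α1 + γ1 = π) (T2 : β2 + α2 + γ2 = π)
    (hang : α2 ≤ α1) (hαsum : α1 + α2 < π) (hβπ : β1 + β2 ≤ π)
    (H1 : Real.sin α1 * Real.sin γ2 ≤ Real.sin α2 * Real.sin γ1)
    (H2 : Real.sin β2 * Real.sin γ1 < Real.sin β1 * Real.sin γ2) :
    β1 + β2 + (α1 + α2) ≤ π := by
  have hπ := Real.pi_pos
  have hsα1 : 0 < Real.sin α1 := Real.sin_pos_of_pos_of_lt_pi hα1 hα1'
  have hsβ1 : 0 < Real.sin β1 := Real.sin_pos_of_pos_of_lt_pi hβ1 hβ1'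
  have hsγ1 : 0 < Real.sin γ1 := Real.sin_pos_of_pos_of_lt_pi hγ1 hγ1'
  have hsγ2 : 0 < Real.sin γ2 := Real.sin_pos_of_pos_of_lt_pi hγ2 hγ2'
  by_contra hcon
  push_neg at hcon
  have hγlt : γ1 + γ2 < π := by linarith
  -- Step 1 : sin α₂ ≤ sin α₁
  have hsinα : Real.sin α2 ≤ Real.sin α1 := by
    have hid := Real.sin_sub_sin α1 α2
    have h1 : 0 ≤ Real.sin ((α1 - α2) / 2) :=
      Real.sin_nonneg_of_nonneg_of_le_pi (by linarith) (by linarith)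
    have h2 : 0 < Real.cos ((α1 + α2) / 2) :=
      Real.cos_pos_of_mem_Ioo ⟨by linarith, by linarith⟩
    nlinarith [mul_nonneg h1 h2.le]
  -- Step 2 : sin γ₂ ≤ sin γ₁
  have hsinγ : Real.sin γ2 ≤ Real.sin γ1 := by
    have t := mul_le_mul_of_nonneg_right hsinα hsγ1.le
    have t' : Real.sin α1 * Real.sin γ2 ≤ Real.sin α1 * Real.sin γ1 := by nlinarith
    exact le_of_mul_le_mul_left t' hsα1
  -- Step 3 : γ₂ ≤ γ₁
  have hγ21 : γ2 ≤ γ1 := by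
    by_contra h'
    push_neg at h'
    have hid := Real.sin_sub_sin γ2 γ1
    have h1 : 0 < Real.sin ((γ2 - γ1) / 2) :=
      Real.sin_pos_of_pos_of_lt_pi (by linarith) (by linarith)
    have h2 : 0 < Real.cos ((γ2 + γ1) / 2) :=
      Real.cos_pos_of_mem_Ioo ⟨by linarith, by linarith⟩
    nlinarith [mul_pos h1 h2]
  -- Step 4 : β₁ ≤ β₂
  have hβ12 : β1 ≤ β2 := by linarith
  -- Step 5 : sin β₂ < sin β₁
  have hsinβ : Real.sin β2 < Real.sin β1 := by
    have t := mul_le_mul_of_nonneg_left hsinγ hsβ1.le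
    have t' : Real.sin β2 * Real.sin γ1 < Real.sin β1 * Real.sin γ1 := by nlinarith
    exact lt_of_mul_lt_mul_right t' hsγ1.le
  -- Step 6 : contradiction via the sine difference formula
  have hid := Real.sin_sub_sin β1 β2
  have hs : Real.sin ((β1 - β2) / 2) ≤ 0 := by
    have h1 : 0 ≤ Real.sin ((β2 - β1) / 2) :=
      Real.sin_nonneg_of_nonneg_of_le_pi (by linarith) (by linarith)
    have heq : (β1 - β2) / 2 = -((β2 - β1) / 2) := by ring
    rw [heq, Real.sin_neg]
    linarith
  have hc : 0 ≤ Real.cos ((β1 + β2) / 2) :=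
    Real.cos_nonneg_of_mem_Icc ⟨by linarith, by linarith⟩
  nlinarith [mul_nonpos_of_nonpos_of_nonneg hs hc]

set_option maxHeartbeats 1600000 in
/-- Let `a b c d` be four pairwise distinct points, no three collinear, forming
a convex quadrilateral in this cyclic order (the open diagonals meet). If `ab ≤ bc`,
`cd < da` and `∠adb ≥ ∠bdc`, then `∠abc + ∠cda ≤ π`. -/
theorem convex_quadrilateral_angle_sum (a b c d : Plane)
    (hab : a ≠ b) (hac : a ≠ c) (had : a ≠ d) (hbc : b ≠ c) (hbd : b ≠ d) (hcd : c ≠ d)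
    (habc : ¬ Collinear ℝ ({a, b, c} : Set Plane))
    (habd : ¬ Collinear ℝ ({a, b, d} : Set Plane))
    (hacd : ¬ Collinear ℝ ({a, c, d} : Set Plane))
    (hbcd : ¬ Collinear ℝ ({b, c, d} : Set Plane))
    (hconv : (openSegment ℝ a c ∩ openSegment ℝ b d).Nonempty)
    (hd1 : dist a b ≤ dist b c) (hd2 : dist c d < dist d a)
    (hang : ∠ b d c ≤ ∠ a d b) :
    ∠ a b c + ∠ c d a ≤ π := by
  obtain ⟨x, hx1, hx2⟩ := hconv
  have haxc : Sbtw ℝ a x c := by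
    refine ⟨mem_segment_iff_wbtw.1 (openSegment_subset_segment ℝ a c hx1), ?_, ?_⟩
    · rintro rfl; exact hac (left_mem_openSegment_iff.1 hx1)
    · rintro rfl; exact hac (right_mem_openSegment_iff.1 hx1)
  have hbxd : Sbtw ℝ b x d := by
    refine ⟨mem_segment_iff_wbtw.1 (openSegment_subset_segment ℝ b d hx2), ?_, ?_⟩
    · rintro rfl; exact hbd (left_mem_openSegment_iff.1 hx2)
    · rintro rfl; exact hbd (right_mem_openSegment_iff.1 hx2)
  have hxb : x ≠ b := hbxd.ne_left
  have hxd : x ≠ d := hbxd.ne_right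
  -- ray substitutions for oriented angles
  have ob1 : ∡ a b x = ∡ a b d := hbxd.wbtw.oangle_eq_right hxb
  have ob2 : ∡ x b c = ∡ d b c := hbxd.wbtw.oangle_eq_left hxb
  have od1 : ∡ a d x = ∡ a d b := hbxd.symm.wbtw.oangle_eq_right hxd
  have od2 : ∡ x d c = ∡ b d c := hbxd.symm.wbtw.oangle_eq_left hxd
  -- sign equalities
  have sb1 : (∡ a b x).sign = (∡ a b c).sign := haxc.oangle_sign_eq_left b
  have sb2 : (∡ x b c).sign = (∡ a b c).sign := haxc.oangle_sign_eq_right b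
  have sd1 : (∡ a d x).sign = (∡ a d c).sign := haxc.oangle_sign_eq_left d
  have sd2 : (∡ x d c).sign = (∡ a d c).sign := haxc.oangle_sign_eq_right d
  have hb0 : (∡ a b c).sign ≠ 0 :=
    fun hs => habc (EuclideanGeometry.oangle_sign_eq_zero_iff_collinear.mp hs)
  have hd0 : (∡ a d c).sign ≠ 0 :=
    fun hs => my_ncol_swap hacd (EuclideanGeometry.oangle_sign_eq_zero_iff_collinear.mp hs)
  -- angle additivity at `b` and `d`
  have S1 : ∠ a b c = ∠ a b d + ∠ d b c :=
    my_angle_add hab hbc.symm hbd.symm (ob1 ▸ sb1) (ob2 ▸ sb2) hb0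
  have S2 : ∠ a d c = ∠ a d b + ∠ b d c :=
    my_angle_add had hcd hbd (od1 ▸ sd1) (od2 ▸ sd2) hd0
  -- triangle angle sums
  have T1 : ∠ a b d + ∠ a d b + ∠ d a b = π := by
    have h := EuclideanGeometry.angle_add_angle_add_angle_eq_pi (p₁ := a) (p₂ := b) d
      hab.symm
    rwa [EuclideanGeometry.angle_comm b d a] at h
  have T2 : ∠ d b c + ∠ b d c + ∠ d c b = π := by
    have h := EuclideanGeometry.angle_add_angle_add_angle_eq_pi (p₁ := c) (p₂ := b) d
      hbc
    rwa [EuclideanGeometry.angle_comm c b d] at h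
  -- positivity of the six angles
  have Pα1 := my_angle_pos_of_not_collinear (my_ncol_swap habd)
  have Pα2 := my_angle_pos_of_not_collinear (my_ncol_swap hbcd)
  have Pβ1 := my_angle_pos_of_not_collinear habd
  have Pβ2 := my_angle_pos_of_not_collinear (my_ncol_rot (my_ncol_rot hbcd))
  have Pγ1 := my_angle_pos_of_not_collinear (my_ncol_rot (my_ncol_rot habd))
  have Pγ2 := my_angle_pos_of_not_collinear (my_ncol_swap (my_ncol_rot (my_ncol_rot hbcd)))
  have Padc := my_angle_pos_of_not_collinear (my_ncol_swap hacd)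
  -- sines are positive
  have hsγ1 : 0 < Real.sin (∠ d a b) := Real.sin_pos_of_pos_of_lt_pi Pγ1.1 Pγ1.2
  have hsγ2 : 0 < Real.sin (∠ d c b) := Real.sin_pos_of_pos_of_lt_pi Pγ2.1 Pγ2.2
  -- distances are positive
  have hdab : 0 < dist a b := dist_pos.2 hab
  have hdad : 0 < dist a d := dist_pos.2 had
  have hdbc : 0 < dist b c := dist_pos.2 hbc
  have hdbd : 0 < dist b d := dist_pos.2 hbd
  have hdcd : 0 < dist c d := dist_pos.2 hcd
  -- the four sine-rule identities
  have e1 : Real.sin (∠ a d b) * dist b d = Real.sin (∠ d a b) * dist a b := by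
    have h := my_sine_rule a d b
    rw [dist_comm d a, dist_comm d b] at h
    exact mul_left_cancel₀ hdad.ne' (by linear_combination h)
  have e2 : Real.sin (∠ b d c) * dist b d = Real.sin (∠ d c b) * dist b c := by
    have h := my_sine_rule c d b
    rw [EuclideanGeometry.angle_comm c d b, dist_comm d c, dist_comm d b, dist_comm c b] at h
    exact mul_left_cancel₀ hdcd.ne' (by linear_combination h)
  have e3 : Real.sin (∠ d a b) * dist a d = Real.sin (∠ a b d) * dist b d := by
    have h := my_sine_rule b a d
    rw [EuclideanGeometry.angle_comm b a d, dist_comm b a] at h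
    exact mul_left_cancel₀ hdab.ne' (by linear_combination h)
  have e4 : Real.sin (∠ d c b) * dist c d = Real.sin (∠ d b c) * dist b d := by
    have h := my_sine_rule b c d
    rw [EuclideanGeometry.angle_comm b c d, EuclideanGeometry.angle_comm c b d,
      dist_comm c b] at h
    exact mul_left_cancel₀ hdbc.ne' (by linear_combination h)
  -- the two distance hypotheses in trigonometric form
  have H1 := my_ratio_le hsγ1.le hsγ2.le hdbd e1 e2 hd1
  have e4' : Real.sin (∠ d b c) * dist b d = Real.sin (∠ d c b) * dist c d := by
    linear_combination -e4
  have e3' : Real.sin (∠ a b d) * dist b d = Real.sin (∠ d a b) * dist a d := by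
    linear_combination -e3
  have hd2' : dist c d < dist a d := by rwa [dist_comm d a] at hd2
  have H2 := my_ratio_lt hsγ2 hsγ1 hdbd e4' e3' hd2'
  -- reduce the goal and apply the trigonometric core
  rw [EuclideanGeometry.angle_comm c d a, S1, S2]
  have hαsum : ∠ a d b + ∠ b d c < π := by
    rw [← S2]; exact Padc.2
  have hβπ : ∠ a b d + ∠ d b c ≤ π := by
    rw [← S1]; exact EuclideanGeometry.angle_le_pi a b c
  exact my_core Pα1.1 Pα1.2 Pα2.1 Pα2.2 Pβ1.1 Pβ1.2 Pβ2.1 Pβ2.2 Pγ1.1 Pγ1.2 Pγ2.1 Pγ2.2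
    T1 T2 hang hαsum hβπ H1 H2
end
end
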